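/- Let P and P* be transition matrices of Markov chains on m states with stationary distributions π and π*, and suppose P* is reversible with respect to π*. Let μ*(P*) = 1 − ‖P* − 𝟙π*ᵀ‖₂ denote the spectral gap of P*. If ‖P − P*‖₂ < μ*(P*), then ‖π − π*‖₂ ≤ ‖π*ᵀ(P* − P)‖₂ / (μ*(P*) − ‖P − P*‖₂), where ‖·‖₂ denotes the ℓ2 operator norm for matrices and Euclidean norm for vectors. -/

import Mathlib

open Matrix Finset

/-- ℓ2 operator norm of a real square matrix. -/
noncomputable def opNorm {m : ℕ} (A : Matrix (Fin m) (Fin m) ℝ) : ℝ :=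
  ‖Matrix.toEuclideanCLM (𝕜 := ℝ) A‖

/-- Euclidean norm of a vector. -/
noncomputable def vecNorm {m : ℕ} (x : Fin m → ℝ) : ℝ :=
  Real.sqrt (∑ i, x i ^ 2)

lemma vecNorm_eq_norm {m : ℕ} (x : Fin m → ℝ) :
    vecNorm x = ‖(WithLp.equiv 2 (Fin m → ℝ)).symm x‖ := by
  rw [EuclideanSpace.norm_eq, vecNorm]
  congr 1
  refine Finset.sum_congr rfl fun i _ => ?_
  rw [Real.norm_eq_abs, sq_abs]
  rfl

lemma vecNorm_neg {m : ℕ} (x : Fin m → ℝ) : vecNorm (-x) = vecNorm x := by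
  unfold vecNorm
  congr 1
  exact Finset.sum_congr rfl fun i _ => by simp

lemma vecNorm_add_le {m : ℕ} (x y : Fin m → ℝ) :
    vecNorm (x + y) ≤ vecNorm x + vecNorm y := by
  simp only [vecNorm_eq_norm, WithLp.equiv_symm_apply, WithLp.toLp_add]
  exact norm_add_le _ _

open scoped Matrix.Norms.L2Operator in
lemma opNorm_transpose {m : ℕ} (M : Matrix (Fin m) (Fin m) ℝ) :
    opNorm Mᵀ = opNorm M := by
  have h : (Mᵀ : Matrix (Fin m) (Fin m) ℝ) = Mᴴ := by
    ext i j; simp [Matrix.conjTranspose_apply]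
  rw [opNorm, opNorm, ← Matrix.cstar_norm_def, ← Matrix.cstar_norm_def, h,
    Matrix.l2_opNorm_conjTranspose]

lemma vecMul_norm_le {m : ℕ} (x : Fin m → ℝ) (M : Matrix (Fin m) (Fin m) ℝ) :
    vecNorm (x ᵥ* M) ≤ opNorm M * vecNorm x := by
  have hx : x ᵥ* M = Mᵀ *ᵥ x := by rw [← Matrix.vecMul_transpose, Matrix.transpose_transpose]
  rw [hx, vecNorm_eq_norm, vecNorm_eq_norm]
  have : (WithLp.equiv 2 (Fin m → ℝ)).symm (Mᵀ *ᵥ x) =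
      Matrix.toEuclideanCLM (𝕜 := ℝ) Mᵀ ((WithLp.equiv 2 (Fin m → ℝ)).symm x) := by
    rw [WithLp.equiv_symm_apply, Matrix.toEuclideanCLM_toLp]
  rw [this, ← opNorm_transpose M]
  exact (Matrix.toEuclideanCLM (𝕜 := ℝ) Mᵀ).le_opNorm _

/-- Eigen-perturbation bound: with μ*(P*) = 1 − ‖P* − 𝟙π*ᵀ‖₂, if ‖P − P*‖₂ < μ*(P*) then
‖π − π*‖₂ ≤ ‖π*ᵀ(P* − P)‖₂ / (μ*(P*) − ‖P − P*‖₂). -/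
theorem eigen_perturbation_bound {m : ℕ}
    (P Ps : Matrix (Fin m) (Fin m) ℝ) (π πs : Fin m → ℝ)
    (hPnn : ∀ i j, 0 ≤ P i j) (hProw : ∀ i, ∑ j, P i j = 1)
    (hPsnn : ∀ i j, 0 ≤ Ps i j) (hPsrow : ∀ i, ∑ j, Ps i j = 1)
    (hπnn : ∀ i, 0 ≤ π i) (hπsum : ∑ i, π i = 1)
    (hπsnn : ∀ i, 0 ≤ πs i) (hπssum : ∑ i, πs i = 1)
    (hstat : π ᵥ* P = π) (hstats : πs ᵥ* Ps = πs)
    (hrev : ∀ i j, πs i * Ps i j = πs j * Ps j i)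
    (hgap : opNorm (P - Ps) < 1 - opNorm (Ps - Matrix.of fun _ j => πs j)) :
    vecNorm (π - πs) ≤ vecNorm (πs ᵥ* (Ps - P)) /
      ((1 - opNorm (Ps - Matrix.of fun _ j => πs j)) - opNorm (P - Ps)) := by
  set Q : Matrix (Fin m) (Fin m) ℝ := Matrix.of fun _ j => πs j with hQ
  -- (π - πs) ᵥ* Q = 0
  have hQzero : (π - πs) ᵥ* Q = 0 := by
    funext j
    simp only [Matrix.vecMul, dotProduct, Pi.zero_apply]
    have : ∑ i, (π - πs) i * Q i j = (∑ i, (π i - πs i)) * πs j := by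
      rw [Finset.sum_mul]
      exact Finset.sum_congr rfl fun i _ => by simp [hQ, Pi.sub_apply]
    rw [this, Finset.sum_sub_distrib, hπsum, hπssum]
    ring
  -- key identity
  have hkey : π - πs = ((π - πs) ᵥ* (Ps - Q)) + ((π - πs) ᵥ* (P - Ps))
      + (πs ᵥ* (P - Ps)) := by
    have h1 : (π - πs) ᵥ* (Ps - Q) + (π - πs) ᵥ* (P - Ps) = (π - πs) ᵥ* P := by
      rw [← Matrix.vecMul_add]
      have : Ps - Q + (P - Ps) = P - Q := by abel
      rw [this, Matrix.vecMul_sub, hQzero, sub_zero]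
    rw [h1, Matrix.sub_vecMul, hstat, Matrix.vecMul_sub, hstats]
    abel
  set d := vecNorm (π - πs) with hd
  set a := opNorm (Ps - Q) with ha
  set e := opNorm (P - Ps) with he
  set c := vecNorm (πs ᵥ* (Ps - P)) with hc
  have hcc : vecNorm (πs ᵥ* (P - Ps)) = c := by
    rw [hc]
    have : πs ᵥ* (P - Ps) = -(πs ᵥ* (Ps - P)) := by
      rw [← Matrix.vecMul_neg, neg_sub]
    rw [this, vecNorm_neg]
  have hdnn : 0 ≤ d := Real.sqrt_nonneg _
  have hcnn : 0 ≤ c := Real.sqrt_nonneg _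
  have hbound : d ≤ a * d + e * d + c := by
    calc d = vecNorm (((π - πs) ᵥ* (Ps - Q)) + ((π - πs) ᵥ* (P - Ps))
        + (πs ᵥ* (P - Ps))) := by rw [hd, ← hkey]
    _ ≤ vecNorm (((π - πs) ᵥ* (Ps - Q)) + ((π - πs) ᵥ* (P - Ps)))
        + vecNorm (πs ᵥ* (P - Ps)) := vecNorm_add_le _ _
    _ ≤ vecNorm ((π - πs) ᵥ* (Ps - Q)) + vecNorm ((π - πs) ᵥ* (P - Ps))
        + vecNorm (πs ᵥ* (P - Ps)) := by
          have := vecNorm_add_le ((π - πs) ᵥ* (Ps - Q)) ((π - πs) ᵥ* (P - Ps))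
          linarith
    _ ≤ a * d + e * d + c := by
          have h1 := vecMul_norm_le (π - πs) (Ps - Q)
          have h2 := vecMul_norm_le (π - πs) (P - Ps)
          rw [hcc]
          linarith
  have hpos : 0 < (1 - a) - e := by linarith
  rw [le_div_iff₀ hpos]
  nlinarith
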